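/- Let p be analytic on the open unit disk with p(0) = 1 and Re p(z) > 1/2 for all z in the unit disk. Then for |z| = r one has Re(z p'(z)/p(z)) ≥ −r/(1+r) whenever r < 1/3, and Re(z p'(z)/p(z)) ≥ −(√2 − √(1−r²))²/(1−r²) whenever 1/3 ≤ r ≤ √(8√2 − 11). -/

import Mathlib

open Metric Real Complex Set Filter



lemma sq_lt_one_of_abs_lt {a : ℂ} (ha : ‖a‖ < 1) : a.re ^ 2 + a.im ^ 2 < 1 := by
  have h1 : Complex.normSq a < 1 := by
    have := Complex.sq_norm a
    nlinarith [norm_nonneg a]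
  simpa [Complex.normSq_apply, sq] using h1

lemma mobius_den_ne {a w : ℂ} (ha : ‖a‖ < 1) (hw : ‖w‖ < 1) :
    (1 : ℂ) - (starRingEnd ℂ) a * w ≠ 0 := by
  intro h
  have h1 : (starRingEnd ℂ) a * w = 1 := by linear_combination -h
  have := congrArg (fun x : ℂ => ‖x‖) h1
  simp only [norm_mul, norm_one, Complex.norm_conj] at this
  nlinarith [norm_nonneg a, norm_nonneg w]

lemma mobius_lt {a w : ℂ} (ha : ‖a‖ < 1) (hw : ‖w‖ < 1) :
    ‖(w - a) / (1 - (starRingEnd ℂ) a * w)‖ < 1 := by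
  have hden := mobius_den_ne ha hw
  rw [norm_div, div_lt_one (norm_pos_iff.2 hden)]
  have ha2 := sq_lt_one_of_abs_lt ha
  have hw2 := sq_lt_one_of_abs_lt hw
  have key : ‖w - a‖ ^ 2 < ‖1 - (starRingEnd ℂ) a * w‖ ^ 2 := by
    rw [Complex.sq_norm, Complex.sq_norm, Complex.normSq_apply, Complex.normSq_apply]
    simp only [Complex.sub_re, Complex.sub_im, Complex.one_re, Complex.one_im,
      Complex.mul_re, Complex.mul_im, Complex.conj_re, Complex.conj_im]
    nlinarith [mul_pos (sub_pos.2 ha2) (sub_pos.2 hw2)]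
  exact lt_of_pow_lt_pow_left₀ 2 (norm_nonneg _) key


lemma mem_ball_abs {w : ℂ} : w ∈ ball (0:ℂ) 1 ↔ ‖w‖ < 1 := by
  simp [Metric.mem_ball, Complex.dist_eq]

lemma sp_open {g : ℂ → ℂ} (hd : DifferentiableOn ℂ g (ball 0 1))
    (hm : MapsTo g (ball 0 1) (ball 0 1)) {z : ℂ} (hz : z ∈ ball (0:ℂ) 1) :
    ‖deriv g z‖ * (1 - ‖z‖ ^ 2) ≤ 1 - ‖g z‖ ^ 2 := by
  have hz1 : ‖z‖ < 1 := mem_ball_abs.1 hz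
  set a := g z with ha_def
  have ha : ‖a‖ < 1 := mem_ball_abs.1 (hm hz)
  set φ : ℂ → ℂ := fun w => (w - (-z)) / (1 - (starRingEnd ℂ) (-z) * w) with hφ_def
  have hzneg : ‖-z‖ < 1 := by simpa using hz1
  have hφm : MapsTo φ (ball 0 1) (ball 0 1) := fun w hw =>
    mem_ball_abs.2 (mobius_lt hzneg (mem_ball_abs.1 hw))
  have hφden : ∀ w ∈ ball (0:ℂ) 1, (1 : ℂ) - (starRingEnd ℂ) (-z) * w ≠ 0 := fun w hw =>
    mobius_den_ne hzneg (mem_ball_abs.1 hw)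
  have hφd : DifferentiableOn ℂ φ (ball 0 1) := by
    apply DifferentiableOn.div
    · exact (differentiable_id.sub_const _).differentiableOn
    · exact ((differentiable_id.const_mul _).const_sub _).differentiableOn
    · exact hφden
  set H : ℂ → ℂ := fun w => (g (φ w) - a) / (1 - (starRingEnd ℂ) a * g (φ w)) with hH_def
  have hφ0 : φ 0 = z := by simp [hφ_def]
  have hH0 : H 0 = 0 := by simp [hH_def, hφ0, ha_def]
  have hHd : DifferentiableOn ℂ H (ball 0 1) := by
    have hgφ : DifferentiableOn ℂ (fun w => g (φ w)) (ball 0 1) := hd.comp hφd hφm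
    apply DifferentiableOn.div
    · exact hgφ.sub_const _
    · exact ((hgφ.const_mul _).const_sub _)
    · exact fun w hw => mobius_den_ne ha (mem_ball_abs.1 (hm (hφm hw)))
  have hHm : MapsTo H (ball 0 1) (ball 0 1) := fun w hw =>
    mem_ball_abs.2 (mobius_lt ha (mem_ball_abs.1 (hm (hφm hw))))
  have hschwarz : ‖deriv H 0‖ ≤ 1 / 1 := by
    refine Complex.norm_deriv_le_div_of_mapsTo_ball hHd ?_ one_pos
    rw [hH0]; exact hHm.mono_right ball_subset_closedBall
  -- compute deriv H 0
  have hgz : DifferentiableAt ℂ g z := hd.differentiableAt (isOpen_ball.mem_nhds hz)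
  have hφ' : HasDerivAt φ (1 - (starRingEnd ℂ) z * z) 0 := by
    have hu : HasDerivAt (fun w : ℂ => w - (-z)) 1 0 := (hasDerivAt_id 0).sub_const _
    have hv : HasDerivAt (fun w : ℂ => 1 - (starRingEnd ℂ) (-z) * w)
        (-((starRingEnd ℂ) (-z))) 0 := by
      simpa using ((hasDerivAt_id (0:ℂ)).const_mul ((starRingEnd ℂ) (-z))).const_sub 1
    have := hu.div hv (by simpa using hφden 0 (by simp))
    refine this.congr_deriv ?_
    simp
    ring
  have hgφ' : HasDerivAt (fun w => g (φ w)) (deriv g z * (1 - (starRingEnd ℂ) z * z)) 0 := by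
    have h1 : HasDerivAt g (deriv g z) (φ 0) := by rw [hφ0]; exact hgz.hasDerivAt
    exact h1.comp 0 hφ'
  have hdenne : (1 : ℂ) - (starRingEnd ℂ) a * a ≠ 0 := mobius_den_ne ha ha
  have hnum : HasDerivAt (fun w => g (φ w) - a)
      (deriv g z * (1 - (starRingEnd ℂ) z * z)) 0 := hgφ'.sub_const a
  have hden : HasDerivAt (fun w => 1 - (starRingEnd ℂ) a * g (φ w))
      (-((starRingEnd ℂ) a * (deriv g z * (1 - (starRingEnd ℂ) z * z)))) 0 :=
    (hgφ'.const_mul _).const_sub 1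
  have hH' : HasDerivAt H
      ((deriv g z * (1 - (starRingEnd ℂ) z * z) * (1 - (starRingEnd ℂ) a * g (φ 0)) -
        (g (φ 0) - a) * -((starRingEnd ℂ) a * (deriv g z * (1 - (starRingEnd ℂ) z * z)))) /
        (1 - (starRingEnd ℂ) a * g (φ 0)) ^ 2) 0 :=
    hnum.div hden (by rw [hφ0, ← ha_def]; exact hdenne)
  have hderivH : deriv H 0 = deriv g z * (1 - (starRingEnd ℂ) z * z) / (1 - (starRingEnd ℂ) a * a) := by
    rw [hH'.deriv, hφ0, ← ha_def]
    field_simp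
    ring
  rw [hderivH] at hschwarz
  have habs1 : ‖1 - (starRingEnd ℂ) z * z‖ = 1 - ‖z‖ ^ 2 := by
    rw [show (starRingEnd ℂ) z * z = ((Complex.normSq z : ℝ) : ℂ) by
      rw [mul_comm]; exact_mod_cast Complex.mul_conj z]
    rw [show (1:ℂ) - ((Complex.normSq z : ℝ) : ℂ) = (((1 - Complex.normSq z : ℝ)) : ℂ) by push_cast; ring]
    rw [Complex.norm_real, Real.norm_eq_abs, _root_.abs_of_nonneg (by nlinarith [Complex.sq_norm z, norm_nonneg z]),
      ← Complex.sq_norm]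
  have habs2 : ‖1 - (starRingEnd ℂ) a * a‖ = 1 - ‖a‖ ^ 2 := by
    rw [show (starRingEnd ℂ) a * a = ((Complex.normSq a : ℝ) : ℂ) by
      rw [mul_comm]; exact_mod_cast Complex.mul_conj a]
    rw [show (1:ℂ) - ((Complex.normSq a : ℝ) : ℂ) = (((1 - Complex.normSq a : ℝ)) : ℂ) by push_cast; ring]
    rw [Complex.norm_real, Real.norm_eq_abs, _root_.abs_of_nonneg (by nlinarith [Complex.sq_norm a, norm_nonneg a]),
      ← Complex.sq_norm]
  have hpos : (0:ℝ) < 1 - ‖a‖ ^ 2 := by nlinarith [norm_nonneg a]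
  have : ‖deriv g z * (1 - (starRingEnd ℂ) z * z) / (1 - (starRingEnd ℂ) a * a)‖ ≤ 1 := by
    simpa using hschwarz
  rw [norm_div, norm_mul, habs1, habs2, div_le_one hpos] at this
  exact this



lemma sp_closed {g : ℂ → ℂ} (hd : DifferentiableOn ℂ g (ball 0 1))
    (hm : ∀ w ∈ ball (0:ℂ) 1, ‖g w‖ ≤ 1) {z : ℂ} (hz : z ∈ ball (0:ℂ) 1) :
    ‖deriv g z‖ * (1 - ‖z‖ ^ 2) ≤ 1 - ‖g z‖ ^ 2 := by
  set B := ‖deriv g z‖ * (1 - ‖z‖ ^ 2) with hB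
  set A := ‖g z‖ ^ 2 with hA
  have key : ∀ s : ℝ, s ∈ Set.Ioo (0:ℝ) 1 → s * B ≤ 1 - s ^ 2 * A := by
    intro s hs
    set gs : ℂ → ℂ := fun w => (s : ℂ) * g w with hgs
    have hgsd : DifferentiableOn ℂ gs (ball 0 1) := hd.const_mul _
    have hgsm : Set.MapsTo gs (ball 0 1) (ball 0 1) := by
      intro w hw
      rw [mem_ball_abs, hgs]
      simp only [norm_mul, Complex.norm_real, Real.norm_eq_abs, _root_.abs_of_nonneg hs.1.le]
      calc s * ‖g w‖ ≤ s * 1 := by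
            exact mul_le_mul_of_nonneg_left (hm w hw) hs.1.le
        _ < 1 := by linarith [hs.2]
    have := sp_open hgsd hgsm hz
    have hderiv : deriv gs z = (s:ℂ) * deriv g z := by
      rw [hgs]
      exact deriv_const_mul _ (hd.differentiableAt (isOpen_ball.mem_nhds hz))
    rw [hderiv] at this
    simp only [norm_mul, Complex.norm_real, Real.norm_eq_abs, _root_.abs_of_nonneg hs.1.le, hgs] at this
    calc s * B = s * ‖deriv g z‖ * (1 - ‖z‖ ^ 2) := by rw [hB]; ring
      _ ≤ 1 - (s * ‖g z‖) ^ 2 := this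
      _ = 1 - s ^ 2 * A := by rw [hA]; ring
  have htend : Tendsto (fun s : ℝ => 1 - s ^ 2 * A - s * B) (nhdsWithin 1 (Set.Iio 1))
      (nhds (1 - 1 ^ 2 * A - 1 * B)) := by
    apply Tendsto.mono_left _ nhdsWithin_le_nhds
    exact (Continuous.tendsto (by continuity) 1)
  have hev : ∀ᶠ s in nhdsWithin (1:ℝ) (Set.Iio 1), 0 ≤ 1 - s ^ 2 * A - s * B := by
    filter_upwards [Ioo_mem_nhdsLT_of_mem (show (1:ℝ) ∈ Set.Ioc (0:ℝ) 1 from ⟨by norm_num, le_rfl⟩)] with s hs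
    linarith [key s hs]
  have := ge_of_tendsto htend hev
  linarith


lemma claimA (r t x s : ℝ) (ht0 : 0 ≤ t) (htr : t ≤ r) (hr1 : r < 1) (hx1 : -t ≤ x)
    (hs1 : 1 - t ≤ s) (hs2 : s ≤ 1 + t) (hs : s ^ 2 = 1 + 2 * x + t ^ 2)
    (hC : (r ^ 2 - t ^ 2) * (1 + t) ≤ (1 - t ^ 2) * (1 - r ^ 2)) :
    (1 - (1 + x) / s ^ 2) + (r ^ 2 - t ^ 2) / ((1 - r ^ 2) * s) ≤
      (t * (1 - r ^ 2) + r ^ 2 - t ^ 2) / ((1 - r ^ 2) * (1 + t)) := by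
  have ht1 : t < 1 := lt_of_le_of_lt htr hr1
  have hspos : 0 < s := lt_of_lt_of_le (by linarith) hs1
  have hr2 : 0 < 1 - r ^ 2 := by nlinarith [ht0.trans htr]
  have htpos : 0 < 1 + t := by linarith
  have hrt : 0 ≤ r ^ 2 - t ^ 2 := by nlinarith
  have hρ : r ^ 2 - t ^ 2 ≤ (1 - t) * (1 - r ^ 2) := by
    have := hC
    nlinarith [htpos]
  have hE : 0 ≤ (1 + t - s) * ((1 - r ^ 2) * (1 - t) * (1 + t + s) / 2 - (r ^ 2 - t ^ 2) * s) := by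
    apply mul_nonneg (by linarith)
    have h2s : 2 * s ≤ 1 + t + s := by linarith
    have : (r ^ 2 - t ^ 2) * s ≤ (1 - t) * (1 - r ^ 2) * s :=
      mul_le_mul_of_nonneg_right hρ hspos.le
    nlinarith [mul_le_mul_of_nonneg_left h2s (mul_nonneg (mul_nonneg hr2.le (by linarith : (0:ℝ) ≤ 1 - t)) (by norm_num : (0:ℝ) ≤ 1/2))]
  have hx : x = (s ^ 2 - 1 - t ^ 2) / 2 := by linarith [hs]
  subst hx
  rw [← sub_nonneg]
  have h1 : (t * (1 - r ^ 2) + r ^ 2 - t ^ 2) / ((1 - r ^ 2) * (1 + t)) -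
      ((1 - (1 + (s ^ 2 - 1 - t ^ 2) / 2) / s ^ 2) + (r ^ 2 - t ^ 2) / ((1 - r ^ 2) * s)) =
      ((1 + t - s) * ((1 - r ^ 2) * (1 - t) * (1 + t + s) / 2 - (r ^ 2 - t ^ 2) * s)) /
        (s ^ 2 * ((1 - r ^ 2) * (1 + t))) := by
    field_simp
    ring
  rw [h1]
  positivity

lemma tbound1 (r t : ℝ) (ht0 : 0 ≤ t) (htr : t ≤ r) (hr : r < 1 / 3) (hr0 : 0 ≤ r) :
    (t * (1 - r ^ 2) + r ^ 2 - t ^ 2) / ((1 - r ^ 2) * (1 + t)) ≤ r / (1 + r) := by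
  have hr2 : 0 < 1 - r ^ 2 := by nlinarith
  rw [div_le_div_iff₀ (by positivity) (by positivity)]
  nlinarith [mul_nonneg (sub_nonneg.2 htr) (show (0:ℝ) ≤ 1 - 2 * r - t by linarith)]

lemma sqrt2_facts : Real.sqrt 2 ^ 2 = 2 ∧ (1.41 : ℝ) ≤ Real.sqrt 2 ∧ Real.sqrt 2 ≤ 1.5 := by
  have h2 : Real.sqrt 2 ^ 2 = 2 := Real.sq_sqrt (by norm_num)
  have h0 : 0 ≤ Real.sqrt 2 := Real.sqrt_nonneg 2
  refine ⟨h2, ?_, ?_⟩ <;> nlinarith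

lemma condC2 (r t : ℝ) (ht0 : 0 ≤ t) (htr : t ≤ r) (hr0 : 0 ≤ r)
    (hru : r ≤ Real.sqrt (8 * Real.sqrt 2 - 11)) :
    (r ^ 2 - t ^ 2) * (1 + t) ≤ (1 - t ^ 2) * (1 - r ^ 2) := by
  obtain ⟨hq2, hq14, hq15⟩ := sqrt2_facts
  set q := Real.sqrt 2
  have hc0 : (0:ℝ) ≤ 8 * q - 11 := by linarith
  have hr2 : r ^ 2 ≤ 8 * q - 11 := by
    have := Real.sq_sqrt hc0
    nlinarith [Real.sqrt_nonneg (8 * q - 11)]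
  have hinner : 0 ≤ t ^ 2 - t * (1 - r ^ 2) + 1 - 2 * r ^ 2 := by
    nlinarith [sq_nonneg (2 * t - (1 - r ^ 2)), sq_nonneg (r ^ 2),
      mul_nonneg (sub_nonneg.2 hr2) (show (0:ℝ) ≤ 6 + (8 * q - 11) + r ^ 2 by nlinarith)]
  nlinarith [mul_nonneg (show (0:ℝ) ≤ 1 + t by linarith) hinner]

lemma tbound2 (r t : ℝ) (ht0 : 0 ≤ t) (htr : t ≤ r) (hr0 : 0 ≤ r) (hr1 : r < 1) :
    (t * (1 - r ^ 2) + r ^ 2 - t ^ 2) / ((1 - r ^ 2) * (1 + t)) ≤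
      (Real.sqrt 2 - Real.sqrt (1 - r ^ 2)) ^ 2 / (1 - r ^ 2) := by
  obtain ⟨hq2, hq14, hq15⟩ := sqrt2_facts
  set q := Real.sqrt 2
  have hr2 : (0:ℝ) < 1 - r ^ 2 := by nlinarith
  set b := Real.sqrt (1 - r ^ 2) with hb
  have hb2 : b ^ 2 = 1 - r ^ 2 := Real.sq_sqrt hr2.le
  have hb0 : 0 ≤ b := Real.sqrt_nonneg _
  rw [div_le_div_iff₀ (by positivity) hr2]
  have key : (q - b) ^ 2 * ((1 - r ^ 2) * (1 + t)) - (t * (1 - r ^ 2) + r ^ 2 - t ^ 2) * (1 - r ^ 2)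
      = b ^ 2 * (1 + t - q * b) ^ 2 := by
    linear_combination ((1 - r ^ 2) * (1 + t) - b ^ 4) * hq2 +
      (2 * q * b * (1 + t) - 2 * b ^ 2 + (1 - r ^ 2) * (t - 1) - (1 + t) ^ 2) * hb2
  nlinarith [key, mul_nonneg (sq_nonneg b) (sq_nonneg (1 + t - q * b))]



lemma key_estimate (p : ℂ → ℂ) (hp : DifferentiableOn ℂ p (ball (0 : ℂ) 1))
    (hp0 : p 0 = 1) (hre : ∀ z ∈ ball (0 : ℂ) 1, 1 / 2 < (p z).re)
    (z : ℂ) (r : ℝ) (hz : ‖z‖ = r) (hr1 : r < 1) :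
    ∃ t x s : ℝ, 0 ≤ t ∧ t ≤ r ∧ -t ≤ x ∧ x ≤ t ∧ 1 - t ≤ s ∧ s ≤ 1 + t ∧
      s ^ 2 = 1 + 2 * x + t ^ 2 ∧
      -((1 - (1 + x) / s ^ 2) + (r ^ 2 - t ^ 2) / ((1 - r ^ 2) * s)) ≤
        (z * deriv p z / p z).re := by
  have hz1 : z ∈ ball (0:ℂ) 1 := mem_ball_abs.2 (hz ▸ hr1)
  have hr0 : 0 ≤ r := hz ▸ norm_nonneg z
  have hpne : ∀ w ∈ ball (0:ℂ) 1, p w ≠ 0 := by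
    intro w hw h
    have := hre w hw
    rw [h] at this; simp at this; linarith
  set ω : ℂ → ℂ := fun w => (p w)⁻¹ - 1 with hω_def
  have hω0 : ω 0 = 0 := by simp [hω_def, hp0]
  have hωd : DifferentiableOn ℂ ω (ball 0 1) := (hp.inv hpne).sub_const 1
  have hωlt : ∀ w ∈ ball (0:ℂ) 1, ‖ω w‖ < 1 := by
    intro w hw
    have hpw := hpne w hw
    have hrew := hre w hw
    have : ω w = (1 - p w) / p w := by rw [hω_def]; field_simp
    rw [this, norm_div, div_lt_one (norm_pos_iff.2 hpw)]
    have h2 : ‖1 - p w‖ ^ 2 < ‖p w‖ ^ 2 := by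
      rw [Complex.sq_norm, Complex.sq_norm, Complex.normSq_apply, Complex.normSq_apply]
      simp only [Complex.sub_re, Complex.sub_im, Complex.one_re, Complex.one_im]
      nlinarith
    exact lt_of_pow_lt_pow_left₀ 2 (norm_nonneg _) h2
  set g : ℂ → ℂ := dslope ω 0 with hg_def
  have hgd : DifferentiableOn ℂ g (ball 0 1) :=
    (differentiableOn_dslope (ball_mem_nhds _ one_pos)).mpr hωd
  have hgle : ∀ w ∈ ball (0:ℂ) 1, ‖g w‖ ≤ 1 := by
    intro w hw
    have := Complex.norm_dslope_le_div_of_mapsTo_ball hωd (R₂ := 1) ?_ hw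
    · simpa using this
    · intro u hu
      rw [hω0, mem_closedBall_zero_iff]
      exact (hωlt u hu).le
  have hωg : ∀ w, ω w = w * g w := by
    intro w
    rcases eq_or_ne w 0 with h | h
    · simp [h, hω0]
    · rw [hg_def, dslope_of_ne _ h, slope_def_field, hω0]
      field_simp
      ring
  -- derivatives at z
  have hpz : DifferentiableAt ℂ p z := hp.differentiableAt (isOpen_ball.mem_nhds hz1)
  have hgz : DifferentiableAt ℂ g z := hgd.differentiableAt (isOpen_ball.mem_nhds hz1)
  have hωz1 : HasDerivAt ω (-deriv p z / p z ^ 2) z :=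
    (hpz.hasDerivAt.inv (hpne z hz1)).sub_const 1
  have hωz2 : HasDerivAt ω (g z + z * deriv g z) z := by
    have h1 : HasDerivAt (fun w => w * g w) (1 * g z + z * deriv g z) z :=
      (hasDerivAt_id z).mul hgz.hasDerivAt
    have h2 : (fun w => w * g w) = ω := by funext w; rw [← hωg]
    rw [h2] at h1
    simpa using h1
  have hde : -deriv p z / p z ^ 2 = g z + z * deriv g z := hωz1.unique hωz2
  set W : ℂ := ω z with hW_def
  have hWlt : ‖W‖ < 1 := hωlt z hz1
  have h1W : (1 : ℂ) + W ≠ 0 := by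
    intro h
    have : W = -1 := by linear_combination h
    rw [this] at hWlt; simp at hWlt
  have hpW : p z = (1 + W)⁻¹ := by
    have : (1:ℂ) + W = (p z)⁻¹ := by rw [hW_def, hω_def]; ring
    rw [this, inv_inv]
  -- express target
  have htarget : z * deriv p z / p z = -((W + z ^ 2 * deriv g z) / (1 + W)) := by
    have hdp : deriv p z = -(g z + z * deriv g z) * p z ^ 2 := by
      have hpzne := hpne z hz1
      field_simp at hde ⊢
      linear_combination -hde
    rw [hdp, hpW]
    have hWzg : W = z * g z := by rw [hW_def, hωg]
    rw [hWzg]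
    have h1Wne : ((1:ℂ) + z * g z) ≠ 0 := by rw [← hWzg]; exact h1W
    field_simp
  -- Schwarz–Pick bound
  have hsp := sp_closed hgd hgle hz1
  rw [hz] at hsp
  have hgzle : ‖g z‖ ≤ 1 := hgle z hz1
  set t : ℝ := ‖W‖ with ht_def
  set x : ℝ := W.re with hx_def
  set s : ℝ := ‖1 + W‖ with hs_def
  have ht0 : 0 ≤ t := norm_nonneg W
  have htr : t ≤ r := by
    rw [ht_def, hW_def, hωg z, norm_mul, hz]
    calc r * ‖g z‖ ≤ r * 1 := mul_le_mul_of_nonneg_left hgzle hr0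
      _ = r := mul_one r
  have hxt : -t ≤ x ∧ x ≤ t := abs_le.1 (Complex.abs_re_le_norm W)
  have hs2 : s ≤ 1 + t := by
    rw [hs_def, ht_def]
    calc ‖1 + W‖ ≤ ‖(1:ℂ)‖ + ‖W‖ := norm_add_le 1 W
      _ = 1 + ‖W‖ := by rw [norm_one]
  have hs1 : 1 - t ≤ s := by
    have h := norm_add_le (1 + W) (-W)
    simp only [add_neg_cancel_right, norm_one, norm_neg] at h
    rw [hs_def, ht_def]; linarith
  have hsq : s ^ 2 = 1 + 2 * x + t ^ 2 := by
    rw [hs_def, Complex.sq_norm, Complex.normSq_apply]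
    simp only [Complex.add_re, Complex.add_im, Complex.one_re, Complex.one_im]
    have : t ^ 2 = x ^ 2 + W.im ^ 2 := by
      rw [ht_def, Complex.sq_norm, Complex.normSq_apply, hx_def]; ring
    rw [this]; ring
  have hspos : 0 < s := by
    have : t < 1 := lt_of_le_of_lt htr hr1
    linarith
  have hr2pos : 0 < 1 - r ^ 2 := by nlinarith
  -- |A - W| bound
  have hAW : ‖z ^ 2 * deriv g z‖ ≤ (r ^ 2 - t ^ 2) / (1 - r ^ 2) := by
    rw [le_div_iff₀ hr2pos, norm_mul, norm_pow, hz]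
    have htgz : t = r * ‖g z‖ := by
      rw [ht_def, hW_def, hωg z, norm_mul, hz]
    calc r ^ 2 * ‖deriv g z‖ * (1 - r ^ 2)
        = r ^ 2 * (‖deriv g z‖ * (1 - r ^ 2)) := by ring
      _ ≤ r ^ 2 * (1 - ‖g z‖ ^ 2) :=
          mul_le_mul_of_nonneg_left hsp (by positivity)
      _ = r ^ 2 - t ^ 2 := by rw [htgz]; ring
  -- real part estimates
  have hre1 : ((W + z ^ 2 * deriv g z) / (1 + W)).re ≤
      (W / (1 + W)).re + (r ^ 2 - t ^ 2) / ((1 - r ^ 2) * s) := by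
    have hsplit : (W + z ^ 2 * deriv g z) / (1 + W) =
        W / (1 + W) + (z ^ 2 * deriv g z) / (1 + W) := by ring
    rw [hsplit, Complex.add_re]
    have h2 : ((z ^ 2 * deriv g z) / (1 + W)).re ≤ (r ^ 2 - t ^ 2) / ((1 - r ^ 2) * s) := by
      calc ((z ^ 2 * deriv g z) / (1 + W)).re ≤ ‖(z ^ 2 * deriv g z) / (1 + W)‖ :=
            Complex.re_le_norm _
        _ = ‖z ^ 2 * deriv g z‖ / s := by rw [norm_div, hs_def]
        _ ≤ ((r ^ 2 - t ^ 2) / (1 - r ^ 2)) / s := by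
            gcongr
        _ = (r ^ 2 - t ^ 2) / ((1 - r ^ 2) * s) := by rw [div_div]
    linarith
  have hre2 : (W / (1 + W)).re = 1 - (1 + x) / s ^ 2 := by
    have : W / (1 + W) = 1 - ((1 + W))⁻¹ := by field_simp; ring
    rw [this, Complex.sub_re, Complex.one_re, Complex.inv_re]
    congr 1
    rw [Complex.add_re, Complex.one_re, ← hx_def, hs_def, Complex.sq_norm]
  refine ⟨t, x, s, ht0, htr, hxt.1, hxt.2, hs1, hs2, hsq, ?_⟩
  rw [htarget, Complex.neg_re, neg_le_neg_iff]
  calc ((W + z ^ 2 * deriv g z) / (1 + W)).re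
      ≤ (W / (1 + W)).re + (r ^ 2 - t ^ 2) / ((1 - r ^ 2) * s) := hre1
    _ = (1 - (1 + x) / s ^ 2) + (r ^ 2 - t ^ 2) / ((1 - r ^ 2) * s) := by rw [hre2]

theorem half_plane_log_deriv_lower_bound
    (p : ℂ → ℂ) (hp : DifferentiableOn ℂ p (ball (0 : ℂ) 1))
    (hp0 : p 0 = 1) (hre : ∀ z ∈ ball (0 : ℂ) 1, 1 / 2 < (p z).re)
    (z : ℂ) (r : ℝ) (hz : ‖z‖ = r) :
    (r < 1 / 3 → (z * deriv p z / p z).re ≥ - r / (1 + r)) ∧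
    (1 / 3 ≤ r → r ≤ Real.sqrt (8 * Real.sqrt 2 - 11) →
      (z * deriv p z / p z).re ≥
        - (Real.sqrt 2 - Real.sqrt (1 - r ^ 2)) ^ 2 / (1 - r ^ 2)) := by
  have hr0 : 0 ≤ r := hz ▸ norm_nonneg z
  constructor
  · intro hr
    have hr1 : r < 1 := by linarith
    obtain ⟨t, x, s, ht0, htr, hx1, hx2, hs1, hs2, hsq, hmain⟩ :=
      key_estimate p hp hp0 hre z r hz hr1
    have hC : (r ^ 2 - t ^ 2) * (1 + t) ≤ (1 - t ^ 2) * (1 - r ^ 2) := by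
      nlinarith [mul_nonneg (show (0:ℝ) ≤ 1 + t by linarith)
        (show (0:ℝ) ≤ t ^ 2 - t * (1 - r ^ 2) + 1 - 2 * r ^ 2 by nlinarith)]
    have h1 := claimA r t x s ht0 htr hr1 hx1 hs1 hs2 hsq hC
    have h2 := tbound1 r t ht0 htr hr hr0
    rw [ge_iff_le, neg_div]
    linarith
  · intro hr13 hru
    obtain ⟨hq2, hq14, hq15⟩ := sqrt2_facts
    have hc0 : (0:ℝ) ≤ 8 * Real.sqrt 2 - 11 := by linarith
    have hr2 : r ^ 2 ≤ 8 * Real.sqrt 2 - 11 := by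
      have := Real.sq_sqrt hc0
      nlinarith [Real.sqrt_nonneg (8 * Real.sqrt 2 - 11)]
    have hr1 : r < 1 := by nlinarith
    obtain ⟨t, x, s, ht0, htr, hx1, hx2, hs1, hs2, hsq, hmain⟩ :=
      key_estimate p hp hp0 hre z r hz hr1
    have hC := condC2 r t ht0 htr hr0 hru
    have h1 := claimA r t x s ht0 htr hr1 hx1 hs1 hs2 hsq hC
    have h2 := tbound2 r t ht0 htr hr0 hr1
    rw [ge_iff_le, neg_div]
    linarith
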